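/- Let F be a field, k ≥ 2, and let p = (p_1,…,p_k) and r = (r_1,…,r_k) be vectors in F^k with ∑_{ℓ=1}^k p_ℓ r_ℓ = 1. Fix an index b ∈ {1,…,k} and δ, ε ∈ F. Let A be the k×k diagonal matrix whose first diagonal entry is ε − (ε + δ)p_b r_b and whose other k−1 diagonal entries are δ; let g be the column vector with first entry δ p_b and remaining entries ε p_ℓ for ℓ ∈ {1,…,k}∖{b}; let h be the column vector with first entry r_b and remaining entries r_ℓ for ℓ ∈ {1,…,k}∖{b}. Then det(A + g hᵗ) = ε (ε + δ) δ^{k−2} (1 − p_b r_b)². In particular, if ε ≠ 0, δ ≠ 0, ε + δ ≠ 0 and p_b r_b ≠ 1, then A + g hᵗ is nonsingular. -/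

import Mathlib

open Matrix Finset

/-- `enum b` enumerates `Fin k` so that position `0` is `b` and positions `1,…,k−1`
list the elements of `{1,…,k}∖{b}` in increasing order. -/
def enum {k : ℕ} (b : Fin k) (i : Fin k) : Fin k :=
  if (i : ℕ) = 0 then b
  else if (i : ℕ) ≤ (b : ℕ) then ⟨(i : ℕ) - 1, lt_of_le_of_lt (Nat.sub_le _ _) i.isLt⟩
  else i

section Aux

variable {R : Type*} [CommRing R] {n : Type*} [Fintype n] [DecidableEq n]

lemma det_one_updateRow (i : n) (h : n → R) :
    ((1 : Matrix n n R).updateRow i h).det = h i := by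
  have hh : h = ∑ j, h j • (1 : Matrix n n R) j := by
    funext x
    simp [Matrix.one_apply, Pi.single_apply]
  rw [show (1 : Matrix n n R).updateRow i h =
      (1 : Matrix n n R).updateRow i (∑ j, h j • (1 : Matrix n n R) j) from by rw [← hh],
    Matrix.det_updateRow_sum]
  simp

lemma det_diagonal_add_vecMulVec (d g h : n → R) :
    (Matrix.diagonal d + Matrix.vecMulVec g h).det =
      (∏ i, d i) + ∑ i, g i * h i * ∏ j ∈ Finset.univ.erase i, d j := by
  classical
  set f := (Matrix.detRowAlternating : (n → R) [⋀^n]→ₗ[R] R) with hf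
  set base : n → n → R := fun i => (1 : Matrix n n R) i with hbase
  have hM : (Matrix.diagonal d + Matrix.vecMulVec g h) =
      (fun i => g i • h) + (fun i => d i • base i) := by
    funext i j
    simp [Matrix.diagonal_apply, Matrix.vecMulVec_apply, Matrix.one_apply, base,
      mul_comm, add_comm]
  have hdet : (Matrix.diagonal d + Matrix.vecMulVec g h).det =
      f ((fun i => g i • h) + (fun i => d i • base i)) := by
    rw [← hM]
    rfl
  rw [hdet, ← AlternatingMap.coe_multilinearMap f, f.toMultilinearMap.map_add_univ]
  simp only [AlternatingMap.coe_multilinearMap]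
  -- each summand
  have key : ∀ s : Finset n, f (s.piecewise (fun i => g i • h) (fun i => d i • base i)) =
      (∏ i, if i ∈ s then g i else d i) • f (fun i => if i ∈ s then h else base i) := by
    intro s
    have : s.piecewise (fun i => g i • h) (fun i => d i • base i) =
        fun i => (if i ∈ s then g i else d i) • (if i ∈ s then h else base i) := by
      funext i
      by_cases hi : i ∈ s <;> simp [Finset.piecewise, hi]
    rw [this, ← AlternatingMap.coe_multilinearMap f, f.toMultilinearMap.map_smul_univ]
  have hzero : ∀ s : Finset n, 1 < s.card →
      f (s.piecewise (fun i => g i • h) (fun i => d i • base i)) = 0 := by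
    intro s hs
    obtain ⟨a, ha, c, hc, hac⟩ := Finset.one_lt_card.mp hs
    rw [key]
    have : f (fun i => if i ∈ s then h else base i) = 0 :=
      f.map_eq_zero_of_eq _ (by simp [ha, hc]) hac
    rw [this, smul_zero]
  -- restrict the sum to ∅ and singletons
  set T : Finset (Finset n) := insert ∅ (Finset.univ.image (fun i : n => {i})) with hT
  have hsum : ∑ s : Finset n,
      f (s.piecewise (fun i => g i • h) (fun i => d i • base i)) =
      ∑ s ∈ T, f (s.piecewise (fun i => g i • h) (fun i => d i • base i)) := by
    refine (Finset.sum_subset (Finset.subset_univ _) ?_).symm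
    intro s _ hsT
    refine hzero s ?_
    rcases Nat.lt_or_ge 1 s.card with h1 | h1
    · exact h1
    · exfalso
      interval_cases hcard : s.card
      · exact hsT (by simp [hT, Finset.card_eq_zero.mp hcard])
      · obtain ⟨a, rfl⟩ := Finset.card_eq_one.mp hcard
        exact hsT (by simp [hT])
  rw [hsum]
  have hnotmem : (∅ : Finset n) ∉ Finset.univ.image (fun i : n => {i}) := by
    simp
  rw [hT, Finset.sum_insert hnotmem,
    Finset.sum_image (by intro a _ b _ hab; simpa using hab)]
  congr 1
  · rw [key]
    have h1 : f (fun i => if i ∈ (∅ : Finset n) then h else base i) = f base :=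
      congrArg f (by funext i; simp)
    have h2 : f base = (1 : Matrix n n R).det := rfl
    simp [h1, h2, smul_eq_mul]
  · refine Finset.sum_congr rfl ?_
    intro i _
    rw [key]
    have h1 : (fun j => if j ∈ ({i} : Finset n) then h else base j) =
        (1 : Matrix n n R).updateRow i h := by
      funext j
      by_cases hj : j = i <;> simp [hj, Matrix.updateRow_apply, base]
    rw [h1, show f ((1 : Matrix n n R).updateRow i h) = ((1 : Matrix n n R).updateRow i h).det
      from rfl, det_one_updateRow]
    have h2 : (∏ j, if j ∈ ({i} : Finset n) then g j else d j) =
        g i * ∏ j ∈ Finset.univ.erase i, d j := by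
      rw [← Finset.mul_prod_erase Finset.univ _ (Finset.mem_univ i)]
      simp only [Finset.mem_singleton, if_pos rfl]
      congr 1
      refine Finset.prod_congr rfl ?_
      intro j hj
      simp [Finset.ne_of_mem_erase hj]
    rw [h2, smul_eq_mul]
    ring

end Aux

/-- (Sherman–Morrison computation in Proposition 1) With
`∑ p_ℓ r_ℓ = 1`, `A = diag(ε − (ε + δ)p_b r_b, δ, …, δ)`, `g = (δ p_b, ε p_ℓ (ℓ ≠ b))ᵗ`
and `h = (r_b, r_ℓ (ℓ ≠ b))ᵗ`, we have `det(A + g hᵗ) = ε(ε + δ)δ^{k−2}(1 − p_b r_b)²`;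
in particular `A + g hᵗ` is nonsingular when `ε, δ, ε + δ ≠ 0` and `p_b r_b ≠ 1`. -/
theorem repair_first_factor_det
    {F : Type*} [Field F] {k : ℕ} (hk : 2 ≤ k)
    (p r : Fin k → F) (hpr : ∑ ℓ, p ℓ * r ℓ = 1)
    (b : Fin k) (δ ε : F) :
    (Matrix.diagonal (fun i : Fin k =>
        if (i : ℕ) = 0 then ε - (ε + δ) * p b * r b else δ) +
      Matrix.vecMulVec
        (fun i : Fin k => if (i : ℕ) = 0 then δ * p b else ε * p (enum b i))
        (fun i : Fin k => if (i : ℕ) = 0 then r b else r (enum b i))).det =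
      ε * (ε + δ) * δ ^ (k - 2) * (1 - p b * r b) ^ 2 ∧
    (ε ≠ 0 → δ ≠ 0 → ε + δ ≠ 0 → p b * r b ≠ 1 →
      IsUnit (Matrix.diagonal (fun i : Fin k =>
          if (i : ℕ) = 0 then ε - (ε + δ) * p b * r b else δ) +
        Matrix.vecMulVec
          (fun i : Fin k => if (i : ℕ) = 0 then δ * p b else ε * p (enum b i))
          (fun i : Fin k => if (i : ℕ) = 0 then r b else r (enum b i))).det) := by
  classical
  set d : Fin k → F := fun i => if (i : ℕ) = 0 then ε - (ε + δ) * p b * r b else δ with hd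
  set g : Fin k → F := fun i => if (i : ℕ) = 0 then δ * p b else ε * p (enum b i) with hg
  set h : Fin k → F := fun i => if (i : ℕ) = 0 then r b else r (enum b i) with hh
  set z : Fin k := ⟨0, by omega⟩ with hz
  have hz0 : (z : ℕ) = 0 := rfl
  have hzval : ∀ i : Fin k, ((i : ℕ) = 0) ↔ i = z := by
    intro i; rw [Fin.ext_iff]
  have hkuniv : (Finset.univ : Finset (Fin k)).card = k := by simp
  have hcard1 : (Finset.univ.erase z).card = k - 1 := by
    rw [Finset.card_erase_of_mem (Finset.mem_univ z), hkuniv]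
  -- the key determinant value
  have hdet : (Matrix.diagonal d + Matrix.vecMulVec g h).det =
      ε * (ε + δ) * δ ^ (k - 2) * (1 - p b * r b) ^ 2 := by
    rw [det_diagonal_add_vecMulVec]
    -- ∏ d
    have hprod : ∏ i, d i = (ε - (ε + δ) * p b * r b) * δ ^ (k - 1) := by
      rw [← Finset.mul_prod_erase Finset.univ d (Finset.mem_univ z)]
      have : ∏ i ∈ Finset.univ.erase z, d i = δ ^ (k - 1) := by
        rw [Finset.prod_congr rfl (fun i hi => ?_), Finset.prod_const, hcard1]
        have : i ≠ z := Finset.ne_of_mem_erase hi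
        simp [hd, (hzval i).not.mpr this]
      rw [this]
      simp [hd, z]
    -- ∏_{j ≠ i} d for i ≠ z
    have hprodne : ∀ i : Fin k, i ≠ z →
        ∏ j ∈ Finset.univ.erase i, d j = (ε - (ε + δ) * p b * r b) * δ ^ (k - 2) := by
      intro i hi
      have hzmem : z ∈ Finset.univ.erase i := Finset.mem_erase.mpr ⟨Ne.symm hi, Finset.mem_univ z⟩
      rw [← Finset.mul_prod_erase _ d hzmem]
      have hc : ((Finset.univ.erase i).erase z).card = k - 2 := by
        rw [Finset.card_erase_of_mem hzmem, Finset.card_erase_of_mem (Finset.mem_univ i), hkuniv]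
        omega
      have : ∏ j ∈ (Finset.univ.erase i).erase z, d j = δ ^ (k - 2) := by
        rw [Finset.prod_congr rfl (fun j hj => ?_), Finset.prod_const, hc]
        have : j ≠ z := Finset.ne_of_mem_erase hj
        simp [hd, (hzval j).not.mpr this]
      rw [this]
      simp [hd, z]
    -- the sum over nonzero indices of p (enum) * r (enum)
    have hbij : ∑ i ∈ Finset.univ.erase z, p (enum b i) * r (enum b i)
        = ∑ ℓ ∈ Finset.univ.erase b, p ℓ * r ℓ := by
      refine Finset.sum_nbij' (enum b)
        (fun ℓ => if hc : (ℓ : ℕ) < (b : ℕ) then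
            ⟨(ℓ : ℕ) + 1, by have := b.isLt; omega⟩ else ℓ) ?_ ?_ ?_ ?_ ?_
      · intro i hi
        have hi0 : (i : ℕ) ≠ 0 := by
          intro hc; exact Finset.ne_of_mem_erase hi ((hzval i).mp hc)
        refine Finset.mem_erase.mpr ⟨?_, Finset.mem_univ _⟩
        simp only [enum, hi0, if_false]
        by_cases hib : (i : ℕ) ≤ (b : ℕ)
        · simp only [hib, if_true]
          intro hc
          rw [Fin.ext_iff] at hc
          simp at hc
          omega
        · simp only [hib, if_false]
          intro hc
          rw [Fin.ext_iff] at hc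
          omega
      · intro ℓ hℓ
        have hℓb : ℓ ≠ b := Finset.ne_of_mem_erase hℓ
        have hℓb' : (ℓ : ℕ) ≠ (b : ℕ) := fun hc => hℓb (Fin.ext hc)
        refine Finset.mem_erase.mpr ⟨?_, Finset.mem_univ _⟩
        by_cases hc : (ℓ : ℕ) < (b : ℕ)
        · beta_reduce
          rw [dif_pos hc]
          intro he
          rw [Fin.ext_iff] at he
          simp at he
        · beta_reduce
          rw [dif_neg hc]
          intro he
          rw [Fin.ext_iff, hz0] at he
          omega
      · intro i hi
        have hi0 : (i : ℕ) ≠ 0 := by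
          intro hc; exact Finset.ne_of_mem_erase hi ((hzval i).mp hc)
        simp only [enum, hi0, if_false]
        by_cases hib : (i : ℕ) ≤ (b : ℕ)
        · simp only [hib, if_true]
          have hlt : (i : ℕ) - 1 < (b : ℕ) := by omega
          rw [dif_pos hlt]
          apply Fin.ext
          show (i : ℕ) - 1 + 1 = (i : ℕ)
          omega
        · simp only [hib, if_false]
          rw [dif_neg (show ¬ (i : ℕ) < (b : ℕ) by omega)]
      · intro ℓ hℓ
        have hℓb : ℓ ≠ b := Finset.ne_of_mem_erase hℓ
        have hℓb' : (ℓ : ℕ) ≠ (b : ℕ) := fun hc => hℓb (Fin.ext hc)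
        by_cases hc : (ℓ : ℕ) < (b : ℕ)
        · beta_reduce
          rw [dif_pos hc]
          simp only [enum]
          rw [if_neg (by simp), if_pos (by show (ℓ : ℕ) + 1 ≤ (b : ℕ); omega)]
          apply Fin.ext
          simp
        · beta_reduce
          rw [dif_neg hc]
          simp only [enum]
          have h0 : (ℓ : ℕ) ≠ 0 := by omega
          rw [if_neg h0, if_neg (by omega)]
      · intro i _
        rfl
    have hsum2 : ∑ ℓ ∈ Finset.univ.erase b, p ℓ * r ℓ = 1 - p b * r b := by
      have := Finset.add_sum_erase Finset.univ (fun ℓ => p ℓ * r ℓ) (Finset.mem_univ b)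
      rw [hpr] at this
      have this' : p b * r b + ∑ ℓ ∈ Finset.univ.erase b, p ℓ * r ℓ = 1 := by
        simpa using this
      linear_combination this'
    -- assemble the sum
    have hsplit : ∑ i, g i * h i * ∏ j ∈ Finset.univ.erase i, d j =
        δ * p b * r b * δ ^ (k - 1) +
          (1 - p b * r b) * (ε * ((ε - (ε + δ) * p b * r b) * δ ^ (k - 2))) := by
      rw [← Finset.add_sum_erase Finset.univ _ (Finset.mem_univ z)]
      congr 1
      · have hzprod : ∏ j ∈ Finset.univ.erase z, d j = δ ^ (k - 1) := by
          rw [Finset.prod_congr rfl (fun i hi => ?_), Finset.prod_const, hcard1]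
          have : i ≠ z := Finset.ne_of_mem_erase hi
          simp [hd, (hzval i).not.mpr this]
        rw [hzprod]
        simp [hg, hh, z]
      · rw [Finset.sum_congr rfl (fun i hi => ?_)]
        · rw [← Finset.sum_mul, hbij, hsum2]
        · have hi0 : i ≠ z := Finset.ne_of_mem_erase hi
          have hi0' : (i : ℕ) ≠ 0 := fun hc => hi0 ((hzval i).mp hc)
          rw [hprodne i hi0]
          simp only [hg, hh, hi0', if_false]
          ring
    rw [hprod, hsplit]
    have hk1 : k - 1 = (k - 2) + 1 := by omega
    rw [hk1, pow_succ]
    ring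
  refine ⟨hdet, fun hε hδ hεδ hpb => ?_⟩
  rw [hdet]
  refine isUnit_iff_ne_zero.mpr ?_
  have h1 : (1 : F) - p b * r b ≠ 0 := sub_ne_zero.mpr (Ne.symm hpb)
  exact mul_ne_zero (mul_ne_zero (mul_ne_zero hε hεδ) (pow_ne_zero _ hδ))
    (pow_ne_zero _ h1)
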